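/- arXiv:1906.08371 — 2 statements merged into one kernel-verified Lean document; each statement's English description precedes it below -/
import Mathlib

section
/- If H is a subgraph of a finite graph G, G → H, and H is a core, then H is an induced subgraph of G. -/
lemma exists_iterate_eq_id {α : Type*} [Finite α] (f : α → α)
    (hf : Function.Bijective f) : ∃ n, 0 < n ∧ f^[n] = id := by
  set e : Equiv.Perm α := Equiv.ofBijective f hf with he
  refine ⟨orderOf e, orderOf_pos e, ?_⟩
  have h : ⇑(e ^ orderOf e) = ⇑(1 : Equiv.Perm α) :=
    congrArg _ (pow_orderOf_eq_one e)
  rw [Equiv.Perm.coe_pow, Equiv.Perm.coe_one] at h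
  exact h

lemma iterate_hom_adj {V : Type*} {G : SimpleGraph V} (f : G →g G) (n : ℕ)
    {a b : V} (h : G.Adj a b) : G.Adj ((⇑f)^[n] a) ((⇑f)^[n] b) := by
  induction n with
  | zero => simpa using h
  | succ k ih =>
    rw [Function.iterate_succ', Function.comp_apply, Function.comp_apply]
    exact f.map_adj ih

/-- If `H` is a subgraph of a finite graph `G`, `G → H`, and `H` is a
core, then `H` is an induced subgraph of `G`. -/
theorem core_subgraph_isInduced {V : Type*} [Fintype V] (G : SimpleGraph V)
    (H : G.Subgraph) (hcore : ∀ f : H.coe →g H.coe, Function.Bijective f)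
    (hom : G →g H.coe) : H.IsInduced := by
  intro u hu v hv huv
  let φ : H.coe →g H.coe := hom.comp H.hom
  obtain ⟨n, hn, hid⟩ := exists_iterate_eq_id (⇑φ) (hcore φ)
  obtain ⟨m, rfl⟩ := Nat.exists_eq_add_of_lt hn
  -- φ ⟨u,hu⟩ = hom u
  have hadj : H.coe.Adj (φ ⟨u, hu⟩) (φ ⟨v, hv⟩) := hom.map_adj huv
  have h2 : H.coe.Adj ((⇑φ)^[m] (φ ⟨u, hu⟩)) ((⇑φ)^[m] (φ ⟨v, hv⟩)) :=
    iterate_hom_adj φ m hadj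
  have h3 : H.coe.Adj ((⇑φ)^[m+1] ⟨u, hu⟩) ((⇑φ)^[m+1] ⟨v, hv⟩) := by
    simpa [Function.iterate_succ_apply] using h2
  rw [show m + 1 = 0 + m + 1 by omega, hid] at h3
  simpa using h3
end

section
/- If H is a projective core on vertex set V(H) and f : H^m → H is any homomorphism (m ≥ 2), then f = g ∘ π_i for some coordinate projection π_i and some automorphism g of H. -/
/-- The `m`-fold direct power of a graph `H`: vertices are `m`-tuples, adjacent iff
adjacent in every coordinate. -/
def graphPow {α : Type*} (H : SimpleGraph α) (m : ℕ) (hm : 0 < m) :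
    SimpleGraph (Fin m → α) where
  Adj a b := ∀ i, H.Adj (a i) (b i)
  symm := ⟨fun _ _ h i => (h i).symm⟩
  loopless := ⟨fun a h => H.loopless.irrefl (a ⟨0, hm⟩) (h ⟨0, hm⟩)⟩

/-- Iterate of an endomorphism, as a hom. -/
def homIter {α : Type*} {H : SimpleGraph α} (e : H →g H) : ℕ → (H →g H)
  | 0 => SimpleGraph.Hom.id
  | n + 1 => e.comp (homIter e n)

lemma homIter_apply {α : Type*} {H : SimpleGraph α} (e : H →g H) (n : ℕ) (x : α) :
    homIter e n x = e^[n] x := by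
  induction n with
  | zero => rfl
  | succ n ih =>
    simp [homIter, Function.iterate_succ_apply', ih]

/-- If `H` is a projective core and `f : H^m → H` is any homomorphism
(`m ≥ 2`), then `f = g ∘ π i` for some coordinate projection `π i` and some
automorphism `g` of `H`. -/
theorem hom_from_power_of_projective_core {α : Type*} [Fintype α] (H : SimpleGraph α)
    (hcore : ∀ f : H →g H, Function.Bijective f)
    (hproj : ∀ (m : ℕ) (hm : 2 ≤ m)
      (f : graphPow H m (by omega) →g H),
      (∀ x : α, f (fun _ => x) = x) → ∃ i : Fin m, ∀ a, f a = a i)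
    (m : ℕ) (hm : 2 ≤ m) (f : graphPow H m (by omega) →g H) :
    ∃ (i : Fin m) (g : H ≃g H), ∀ a, f a = g (a i) := by
  classical
  -- diagonal hom
  let diag : H →g graphPow H m (by omega) :=
    ⟨fun x => fun _ => x, fun h _ => h⟩
  set e : H →g H := f.comp diag with he
  have hbij : Function.Bijective e := hcore e
  set σ : Equiv.Perm α := Equiv.ofBijective e hbij with hσ
  have hσe : ∀ x, σ x = e x := fun x => rfl
  obtain ⟨n, hn, hpow⟩ : ∃ n, 0 < n ∧ σ ^ n = 1 :=
    ⟨orderOf σ, orderOf_pos σ, pow_orderOf_eq_one σ⟩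
  have hiter : ∀ k x, e^[k] x = (σ ^ k) x := by
    intro k
    induction k with
    | zero => intro x; simp
    | succ k ih =>
      intro x
      rw [Function.iterate_succ_apply', ih, pow_succ']
      simp [hσe]
  -- build automorphism g with underlying σ
  have hback : ∀ a b, H.Adj (σ a) (σ b) → H.Adj a b := by
    intro a b hab
    have h1 := (homIter e (n - 1)).map_adj hab
    rw [homIter_apply, homIter_apply, hiter, hiter] at h1
    have : ∀ x, (σ ^ (n - 1)) (σ x) = x := by
      intro x
      have : (σ ^ (n - 1)) (σ x) = (σ ^ n) x := by
        rw [← Equiv.Perm.mul_apply, ← pow_succ]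
        have hn1 : n - 1 + 1 = n := by omega
        rw [hn1]
      rw [this, hpow]; rfl
    rwa [this a, this b] at h1
  let g : H ≃g H := ⟨σ, by
    intro a b
    constructor
    · exact hback a b
    · intro h; exact e.map_adj h⟩
  -- F = g⁻¹ ∘ f is idempotent
  have gsymm_hom : ∀ a b, H.Adj a b → H.Adj (g.symm a) (g.symm b) := by
    intro a b hab
    apply hback
    have h1 : σ (g.symm a) = a := g.apply_symm_apply a
    have h2 : σ (g.symm b) = b := g.apply_symm_apply b
    rwa [h1, h2]
  let F : graphPow H m (by omega) →g H :=
    ⟨fun a => g.symm (f a), fun h => gsymm_hom _ _ (f.map_adj h)⟩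
  have hFdiag : ∀ x : α, F (fun _ => x) = x := by
    intro x
    show g.symm (f (fun _ => x)) = x
    have : f (fun _ => x) = σ x := rfl
    rw [this]
    exact g.symm_apply_apply x
  obtain ⟨i, hi⟩ := hproj m hm F hFdiag
  refine ⟨i, g, fun a => ?_⟩
  have := hi a
  have h2 : g (F a) = g (a i) := by rw [this]
  have h3 : g (F a) = f a := g.apply_symm_apply (f a)
  rw [← h3, h2]
end
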